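/- Let A ∈ ℝ[t]^{n×n} be a matrix polynomial of degree at most d and let r be an integer with 1 ≤ r ≤ n. Call ΔA ∈ ℝ[t]^{n×n} feasible if deg(ΔA_{ij}) ≤ deg(A_{ij}) for all 1 ≤ i, j ≤ n and the rank of A + ΔA over ℝ(t) is at most n−r. Then the set of feasible perturbations is nonempty (ΔA = −A is feasible) and there exists a feasible ΔA* of minimal Frobenius norm, i.e., ‖ΔA*‖_F ≤ ‖ΔA‖_F for every feasible ΔA: the infimum of ‖ΔA‖_F over feasible ΔA is attained. -/

import Mathlib

set_option maxHeartbeats 1000000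

open Polynomial Matrix

section MinorRank

variable {K : Type*} [Field K] {m n : Type*} [Fintype m] [Fintype n]
  [DecidableEq m] [DecidableEq n] {s : ℕ}

lemma aux_rank_submatrix_le (M : Matrix m n K) (r : Fin s → m) (c : Fin s → n) :
    (M.submatrix r c).rank ≤ M.rank := by
  classical
  have h1 : (Matrix.of fun i j => if r i = j then (1 : K) else 0) * (M.submatrix id c)
      = M.submatrix r c := by
    ext i j
    rw [Matrix.mul_apply]
    simp [ite_mul]
  have h2 : M * (Matrix.of fun j i => if j = c i then (1 : K) else 0) = M.submatrix id c := by
    ext i j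
    rw [Matrix.mul_apply]
    simp [mul_ite]
  calc (M.submatrix r c).rank
      = ((Matrix.of fun i j => if r i = j then (1 : K) else 0) * (M.submatrix id c)).rank := by
        rw [h1]
    _ ≤ (M.submatrix id c).rank := Matrix.rank_mul_le_right _ _
    _ = (M * (Matrix.of fun j i => if j = c i then (1 : K) else 0)).rank := by rw [h2]
    _ ≤ M.rank := Matrix.rank_mul_le_left _ _

lemma aux_le_rank_of_det_ne_zero (M : Matrix m n K) (r : Fin s → m) (c : Fin s → n)
    (h : (M.submatrix r c).det ≠ 0) : s ≤ M.rank := by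
  have hu : IsUnit (M.submatrix r c) := (Matrix.isUnit_iff_isUnit_det _).2 (isUnit_iff_ne_zero.2 h)
  have hru := Matrix.rank_of_isUnit _ hu
  calc s = (M.submatrix r c).rank := by rw [hru, Fintype.card_fin]
    _ ≤ M.rank := aux_rank_submatrix_le M r c

lemma aux_exists_li_cols (M : Matrix m n K) (h : s ≤ M.rank) :
    ∃ c : Fin s → n, LinearIndependent K (fun j => Mᵀ (c j)) := by
  classical
  obtain ⟨b, hbsub, hspan, hli⟩ := exists_linearIndependent K (Set.range Mᵀ)
  have hbfin : b.Finite := (Set.finite_range Mᵀ).subset hbsub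
  haveI : Fintype b := hbfin.fintype
  have hcard : s ≤ Fintype.card b := by
    have h1 : M.rank = Set.finrank K (Set.range Mᵀ) := Matrix.rank_eq_finrank_span_cols M
    have h2 : Set.finrank K (Set.range Mᵀ) = Module.finrank K (Submodule.span K b) := by
      rw [Set.finrank, ← hspan]
    have h3 : Module.finrank K (Submodule.span K b) = b.toFinset.card :=
      finrank_span_set_eq_card hli
    have h4 : b.toFinset.card = Fintype.card b := Set.toFinset_card b
    omega
  obtain ⟨f⟩ : Nonempty (Fin s ↪ b) := by
    apply Function.Embedding.nonempty_of_card_le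
    simpa using hcard
  have hli2 : LinearIndependent K fun i : Fin s => ((f i : m → K)) :=
    hli.comp f f.injective
  have hmem : ∀ i : Fin s, ∃ x : n, Mᵀ x = (f i : m → K) := fun i => hbsub (f i).2
  choose c hc using hmem
  exact ⟨c, by simpa only [hc] using hli2⟩

lemma aux_exists_det_ne_zero (M : Matrix m n K) (h : s ≤ M.rank) :
    ∃ (r : Fin s → m) (c : Fin s → n), (M.submatrix r c).det ≠ 0 := by
  classical
  obtain ⟨c, hc⟩ := aux_exists_li_cols M h
  set V : Matrix m (Fin s) K := M.submatrix id c with hV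
  have hrV : s ≤ V.rank := by
    have h1 : V.rank = Set.finrank K (Set.range Vᵀ) := Matrix.rank_eq_finrank_span_cols V
    have h2 : (Vᵀ : Fin s → m → K) = fun j => Mᵀ (c j) := rfl
    have h3 : Module.finrank K (Submodule.span K (Set.range fun j => Mᵀ (c j)))
        = Fintype.card (Fin s) := finrank_span_eq_card hc
    rw [h1, h2, Set.finrank, h3, Fintype.card_fin]
  have hrVt : s ≤ Vᵀ.rank := by rwa [Matrix.rank_transpose]
  obtain ⟨r, hr⟩ := aux_exists_li_cols Vᵀ hrVt
  have hr' : LinearIndependent K fun j : Fin s => V (r j) := by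
    simpa [Matrix.transpose_transpose] using hr
  refine ⟨r, c, ?_⟩
  have hW : (fun i : Fin s => (M.submatrix r c) i) = fun j => V (r j) := by
    funext j; ext i; simp [hV, Matrix.submatrix_apply]
  have hu : IsUnit (M.submatrix r c) := by
    rw [← Matrix.linearIndependent_rows_iff_isUnit]
    exact (hW ▸ hr' : LinearIndependent K fun i : Fin s => (M.submatrix r c) i)
  exact isUnit_iff_ne_zero.1 ((Matrix.isUnit_iff_isUnit_det _).1 hu)

lemma aux_le_rank_iff (M : Matrix m n K) (s : ℕ) :
    s ≤ M.rank ↔ ∃ (r : Fin s → m) (c : Fin s → n), (M.submatrix r c).det ≠ 0 := by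
  constructor
  · exact aux_exists_det_ne_zero M
  · rintro ⟨r, c, h⟩; exact aux_le_rank_of_det_ne_zero M r c h

lemma aux_rank_le_iff (M : Matrix m n K) (k : ℕ) :
    M.rank ≤ k ↔ ∀ (r : Fin (k+1) → m) (c : Fin (k+1) → n), (M.submatrix r c).det = 0 := by
  rw [← not_lt, Nat.lt_iff_add_one_le, aux_le_rank_iff]
  push_neg
  rfl

end MinorRank

/-- The rank of a matrix polynomial over the rational function field `ℝ(t)`. -/
noncomputable def matPolyRank (n : ℕ) (A : Matrix (Fin n) (Fin n) (Polynomial ℝ)) : ℕ :=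
  (A.map (algebraMap (Polynomial ℝ) (RatFunc ℝ))).rank

/-- The Frobenius norm `‖A‖_F` of a matrix polynomial, the square root of the sum of
the squares of all scalar coefficients of all entries. -/
noncomputable def matPolyFrobNorm (n : ℕ) (A : Matrix (Fin n) (Fin n) (Polynomial ℝ)) : ℝ :=
  Real.sqrt (∑ i, ∑ j, ∑ k ∈ (A i j).support, ((A i j).coeff k) ^ 2)

/-- A perturbation `ΔA` is feasible for `A` and target kernel dimension `r` if each
entry of `ΔA` has degree at most the degree of the corresponding entry of `A`
(the zero polynomial having degree `⊥`, so zero entries of `A` may not be perturbed)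
and the rank of `A + ΔA` over `ℝ(t)` is at most `n − r`. -/
def Feasible (n r : ℕ) (A ΔA : Matrix (Fin n) (Fin n) (Polynomial ℝ)) : Prop :=
  (∀ i j, (ΔA i j).degree ≤ (A i j).degree) ∧
    matPolyRank n (A + ΔA) ≤ n - r

section RankEval

lemma aux_det_submatrix_map {R S : Type*} [CommRing R] [CommRing S] (f : R →+* S) {n s : ℕ}
    (M : Matrix (Fin n) (Fin n) R) (r c : Fin s → Fin n) :
    ((M.map f).submatrix r c).det = f (M.submatrix r c).det := by
  rw [Matrix.submatrix_map]
  have h := RingHom.map_det f (M.submatrix r c)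
  rw [RingHom.mapMatrix_apply] at h
  exact h.symm

lemma aux_matPolyRank_le_iff {n : ℕ} (M : Matrix (Fin n) (Fin n) (Polynomial ℝ)) (k : ℕ) :
    matPolyRank n M ≤ k ↔ ∀ t₀ : ℝ, (M.map (fun p => p.eval t₀)).rank ≤ k := by
  have halg : Function.Injective (algebraMap (Polynomial ℝ) (RatFunc ℝ)) :=
    RatFunc.algebraMap_injective ℝ
  rw [matPolyRank, aux_rank_le_iff]
  constructor
  · intro h t₀
    rw [aux_rank_le_iff]
    intro r c
    have h0 := h r c
    rw [aux_det_submatrix_map] at h0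
    have hdet : (M.submatrix r c).det = 0 := by
      apply halg
      rw [h0, map_zero]
    have h1 := aux_det_submatrix_map (Polynomial.evalRingHom t₀) M r c
    simp only [Polynomial.coe_evalRingHom] at h1
    rw [h1, hdet, Polynomial.eval_zero]
  · intro h r c
    rw [aux_det_submatrix_map]
    have hdet : (M.submatrix r c).det = 0 := by
      apply Polynomial.funext
      intro t₀
      have h1 := (aux_rank_le_iff _ k).1 (h t₀) r c
      have h2 := aux_det_submatrix_map (Polynomial.evalRingHom t₀) M r c
      simp only [Polynomial.coe_evalRingHom] at h2
      rw [h2] at h1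
      simpa using h1
    rw [hdet, map_zero]

lemma aux_isClosed_rank_le (n k : ℕ) :
    IsClosed {B : Matrix (Fin n) (Fin n) ℝ | B.rank ≤ k} := by
  have h : {B : Matrix (Fin n) (Fin n) ℝ | B.rank ≤ k} =
      ⋂ (r : Fin (k+1) → Fin n), ⋂ (c : Fin (k+1) → Fin n),
        {B | (B.submatrix r c).det = 0} := by
    ext B
    simp only [Set.mem_setOf_eq, Set.mem_iInter]
    exact aux_rank_le_iff B k
  rw [h]
  refine isClosed_iInter fun r => isClosed_iInter fun c => ?_
  exact isClosed_eq (Continuous.matrix_det (continuous_id.matrix_submatrix r c)) continuous_const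

end RankEval

section Phi

noncomputable def phi (n d : ℕ) (c : Fin n × Fin n × Fin (d+1) → ℝ) :
    Matrix (Fin n) (Fin n) (Polynomial ℝ) :=
  Matrix.of fun i j => ∑ k : Fin (d+1), Polynomial.C (c (i, j, k)) * Polynomial.X ^ (k : ℕ)

lemma coeff_phi (n d : ℕ) (c : Fin n × Fin n × Fin (d+1) → ℝ) (i j : Fin n) (m : ℕ) :
    (phi n d c i j).coeff m = if h : m < d+1 then c (i, j, ⟨m, h⟩) else 0 := by
  simp only [phi, Matrix.of_apply, Polynomial.finset_sum_coeff, Polynomial.coeff_C_mul,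
    Polynomial.coeff_X_pow, mul_ite, mul_one, mul_zero]
  split
  · next h =>
    rw [Finset.sum_eq_single (⟨m, h⟩ : Fin (d+1))]
    · simp
    · intro b _ hb
      rw [if_neg]
      intro hmb
      apply hb
      ext
      simp [← hmb]
    · simp
  · next h =>
    apply Finset.sum_eq_zero
    intro b _
    rw [if_neg]
    omega

lemma phi_coeffvec (n d : ℕ) (M : Matrix (Fin n) (Fin n) (Polynomial ℝ))
    (hM : ∀ i j, (M i j).natDegree ≤ d) :
    phi n d (fun x => (M x.1 x.2.1).coeff (x.2.2 : ℕ)) = M := by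
  ext i j m
  rw [coeff_phi]
  split
  · rfl
  · next h =>
    symm
    apply Polynomial.coeff_eq_zero_of_natDegree_lt
    have := hM i j
    omega

lemma frob_phi (n d : ℕ) (c : Fin n × Fin n × Fin (d+1) → ℝ) :
    matPolyFrobNorm n (phi n d c) =
      Real.sqrt (∑ x : Fin n × Fin n × Fin (d+1), c x ^ 2) := by
  unfold matPolyFrobNorm
  congr 1
  rw [Fintype.sum_prod_type]
  refine Finset.sum_congr rfl fun i _ => ?_
  rw [Fintype.sum_prod_type]
  refine Finset.sum_congr rfl fun j _ => ?_
  have hsub : (phi n d c i j).support ⊆ Finset.range (d+1) := by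
    intro k hk
    rw [Polynomial.mem_support_iff, coeff_phi] at hk
    rw [Finset.mem_range]
    by_contra hc
    exact hk (dif_neg hc)
  rw [Finset.sum_subset hsub (fun k _ hk => by
    rw [Polynomial.notMem_support_iff.1 hk]; ring)]
  rw [← Fin.sum_univ_eq_sum_range (fun k => ((phi n d c i j).coeff k) ^ 2) (d+1)]
  refine Finset.sum_congr rfl fun k _ => ?_
  rw [coeff_phi, dif_pos k.isLt]

lemma degree_phi_le_iff (n d : ℕ) (A : Matrix (Fin n) (Fin n) (Polynomial ℝ))
    (c : Fin n × Fin n × Fin (d+1) → ℝ) :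
    (∀ i j, (phi n d c i j).degree ≤ (A i j).degree) ↔
      ∀ (i j : Fin n) (k : Fin (d+1)),
        (A i j).degree < ((k : ℕ) : WithBot ℕ) → c (i, j, k) = 0 := by
  constructor
  · intro h i j k hk
    have h0 : (phi n d c i j).coeff (k : ℕ) = 0 :=
      Polynomial.coeff_eq_zero_of_degree_lt (lt_of_le_of_lt (h i j) hk)
    rw [coeff_phi, dif_pos k.isLt] at h0
    simpa using h0
  · intro h i j
    rw [Polynomial.degree_le_iff_coeff_zero]
    intro m hm
    rw [coeff_phi]
    split
    · next hmd => exact h i j ⟨m, hmd⟩ hm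
    · rfl

end Phi

/-- For any matrix polynomial `A ∈ ℝ[t]^{n×n}` of degree at most `d`
and integer `1 ≤ r ≤ n`, the set of feasible perturbations is nonempty (`ΔA = −A` is
feasible) and the infimum of `‖ΔA‖_F` over feasible perturbations is attained: there
is a feasible `ΔA*` with `‖ΔA*‖_F ≤ ‖ΔA‖_F` for every feasible `ΔA`. -/
theorem exists_minimal_feasible_perturbation
    (n d r : ℕ) (hr1 : 1 ≤ r) (hrn : r ≤ n)
    (A : Matrix (Fin n) (Fin n) (Polynomial ℝ))
    (hA : ∀ i j, (A i j).natDegree ≤ d) :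
    Feasible n r A (-A) ∧
    ∃ ΔAstar : Matrix (Fin n) (Fin n) (Polynomial ℝ),
      Feasible n r A ΔAstar ∧
      ∀ ΔA : Matrix (Fin n) (Fin n) (Polynomial ℝ),
        Feasible n r A ΔA → matPolyFrobNorm n ΔAstar ≤ matPolyFrobNorm n ΔA := by
  classical
  have hdegA : ∀ i j, (A i j).degree ≤ (d : WithBot ℕ) := by
    intro i j
    exact le_trans (Polynomial.degree_le_natDegree) (by exact_mod_cast hA i j)
  have hneg : Feasible n r A (-A) := by
    refine ⟨fun i j => ?_, ?_⟩
    · simp [Matrix.neg_apply]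
    · have h0 : A + -A = 0 := add_neg_cancel A
      rw [h0, matPolyRank, Matrix.map_zero _ (map_zero _), Matrix.rank_zero]
      exact Nat.zero_le _
  refine ⟨hneg, ?_⟩
  set g : (Fin n × Fin n × Fin (d+1) → ℝ) → ℝ :=
    fun c => Real.sqrt (∑ x : Fin n × Fin n × Fin (d+1), c x ^ 2) with hgdef
  have hgc : Continuous g := by
    apply Real.continuous_sqrt.comp
    exact continuous_finset_sum _ fun x _ => (continuous_apply x).pow 2
  set S : Set (Fin n × Fin n × Fin (d+1) → ℝ) :=
    {c | Feasible n r A (phi n d c)} with hSdef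
  have hnatdeg : ∀ ΔA : Matrix (Fin n) (Fin n) (Polynomial ℝ),
      (∀ i j, (ΔA i j).degree ≤ (A i j).degree) → ∀ i j, (ΔA i j).natDegree ≤ d :=
    fun ΔA h i j => Polynomial.natDegree_le_iff_degree_le.2 (le_trans (h i j) (hdegA i j))
  have hphicoeff : ∀ ΔA : Matrix (Fin n) (Fin n) (Polynomial ℝ), Feasible n r A ΔA →
      phi n d (fun x => (ΔA x.1 x.2.1).coeff (x.2.2 : ℕ)) = ΔA :=
    fun ΔA h => phi_coeffvec n d ΔA (hnatdeg ΔA h.1)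
  set c₀ : Fin n × Fin n × Fin (d+1) → ℝ :=
    fun x => ((-A) x.1 x.2.1).coeff (x.2.2 : ℕ) with hc₀def
  have hc₀ : phi n d c₀ = -A := hphicoeff _ hneg
  have hc₀S : c₀ ∈ S := by
    rw [hSdef, Set.mem_setOf_eq, hc₀]
    exact hneg
  -- closedness of S
  have hmap : ∀ (c : Fin n × Fin n × Fin (d+1) → ℝ) (t₀ : ℝ),
      (A + phi n d c).map (fun p => p.eval t₀) =
        Matrix.of (fun i j => (A i j).eval t₀ +
          ∑ k : Fin (d+1), c (i, j, k) * t₀ ^ (k : ℕ)) := by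
    intro c t₀
    ext i j
    simp [phi, Matrix.add_apply, Polynomial.eval_finset_sum]
  have hSeq : S =
      (⋂ (i : Fin n), ⋂ (j : Fin n), ⋂ (k : Fin (d+1)),
        {c : Fin n × Fin n × Fin (d+1) → ℝ |
          (A i j).degree < ((k : ℕ) : WithBot ℕ) → c (i, j, k) = 0}) ∩
      (⋂ t₀ : ℝ,
        (fun c : Fin n × Fin n × Fin (d+1) → ℝ =>
            Matrix.of (fun i j => (A i j).eval t₀ +
              ∑ k : Fin (d+1), c (i, j, k) * t₀ ^ (k : ℕ))) ⁻¹'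
          {B : Matrix (Fin n) (Fin n) ℝ | B.rank ≤ n - r}) := by
    ext c
    simp only [hSdef, Set.mem_setOf_eq, Set.mem_inter_iff, Set.mem_iInter, Set.mem_preimage]
    apply and_congr
    · exact degree_phi_le_iff n d A c
    · rw [aux_matPolyRank_le_iff]
      apply forall_congr'
      intro t₀
      rw [hmap c t₀]
  have hSclosed : IsClosed S := by
    rw [hSeq]
    apply IsClosed.inter
    · refine isClosed_iInter fun i => isClosed_iInter fun j => isClosed_iInter fun k => ?_
      by_cases hd : (A i j).degree < ((k : ℕ) : WithBot ℕ)
      · have : {c : Fin n × Fin n × Fin (d+1) → ℝ |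
            (A i j).degree < ((k : ℕ) : WithBot ℕ) → c (i, j, k) = 0} =
            {c | c (i, j, k) = 0} := by
          ext c; simp [hd]
        rw [this]
        exact isClosed_eq (continuous_apply _) continuous_const
      · have : {c : Fin n × Fin n × Fin (d+1) → ℝ |
            (A i j).degree < ((k : ℕ) : WithBot ℕ) → c (i, j, k) = 0} = Set.univ := by
          ext c; simp [hd]
        rw [this]
        exact isClosed_univ
    · refine isClosed_iInter fun t₀ => IsClosed.preimage ?_ (aux_isClosed_rank_le n (n - r))
      apply continuous_matrix
      intro i j
      exact continuous_const.add
        (continuous_finset_sum _ fun k _ => (continuous_apply (i, j, k)).mul continuous_const)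
  -- compactness argument
  set R0 : ℝ := g c₀ with hR0def
  set Kc : Set (Fin n × Fin n × Fin (d+1) → ℝ) := S ∩ {c | g c ≤ R0} with hKdef
  have hKsub : Kc ⊆ Set.pi Set.univ
      (fun _ : Fin n × Fin n × Fin (d+1) => Set.Icc (-R0) R0) := by
    intro c hc x _
    have h1 : c x ^ 2 ≤ ∑ y : Fin n × Fin n × Fin (d+1), c y ^ 2 :=
      Finset.single_le_sum (fun y _ => sq_nonneg (c y)) (Finset.mem_univ x)
    have h2 : |c x| ≤ g c := by
      rw [← Real.sqrt_sq_eq_abs]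
      exact Real.sqrt_le_sqrt h1
    have h3 : |c x| ≤ R0 := le_trans h2 hc.2
    rw [Set.mem_Icc]
    exact abs_le.1 h3
  have hKclosed : IsClosed Kc := hSclosed.inter (isClosed_le hgc continuous_const)
  have hKcompact : IsCompact Kc :=
    (isCompact_univ_pi (fun _ => isCompact_Icc)).of_isClosed_subset hKclosed hKsub
  have hKne : Kc.Nonempty := ⟨c₀, hc₀S, le_refl R0⟩
  obtain ⟨cm, hcmK, hcmmin⟩ := hKcompact.exists_isMinOn hKne hgc.continuousOn
  refine ⟨phi n d cm, hcmK.1, ?_⟩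
  intro ΔA hΔA
  have hΔeq : phi n d (fun x => (ΔA x.1 x.2.1).coeff (x.2.2 : ℕ)) = ΔA := hphicoeff ΔA hΔA
  set cΔ : Fin n × Fin n × Fin (d+1) → ℝ :=
    fun x => (ΔA x.1 x.2.1).coeff (x.2.2 : ℕ) with hcΔdef
  have hΔS : cΔ ∈ S := by
    rw [hSdef, Set.mem_setOf_eq, hΔeq]
    exact hΔA
  have e1 : matPolyFrobNorm n (phi n d cm) = g cm := frob_phi n d cm
  have e2 : matPolyFrobNorm n ΔA = g cΔ := by
    rw [← hΔeq]
    exact frob_phi n d cΔ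
  rw [e1, e2]
  by_cases hc : g cΔ ≤ R0
  · exact (isMinOn_iff.1 hcmmin) cΔ ⟨hΔS, hc⟩
  · have hb : g cm ≤ R0 := hcmK.2
    linarith [not_le.1 hc]
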